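/- There exists a constant c > 0 such that for all n ≥ 1, the diffusion state distance DSD_1(𝟎,𝟏) on the hypercube Q_n between the all-zero string 𝟎 and the all-one string 𝟏 satisfies DSD_1(𝟎,𝟏) ≥ c·n; that is, DSD_1(𝟎,𝟏) = Ω(n). -/

import Mathlib

/-- The hypercube graph `Q_n`: vertices are binary strings of length `n`, with edges joining
pairs of strings differing in exactly one coordinate. -/
def hypercubeGraph (n : ℕ) : SimpleGraph (Fin n → Bool) where
  Adj x y := hammingDist x y = 1
  symm := ⟨fun x y h => (hammingDist_comm y x).trans h⟩
  loopless := ⟨fun x h => absurd ((hammingDist_self x).symm.trans h) (by omega)⟩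

instance hypercubeGraphAdjDecidable (n : ℕ) : DecidableRel (hypercubeGraph n).Adj :=
  fun x y => inferInstanceAs (Decidable (hammingDist x y = 1))

open Finset


noncomputable def wtR {n : ℕ} (y : Fin n → Bool) : ℝ := ∑ i, if y i then 1 else 0

lemma wtR_nonneg {n : ℕ} (y : Fin n → Bool) : 0 ≤ wtR y :=
  Finset.sum_nonneg fun i _ => by split <;> norm_num

lemma wtR_le {n : ℕ} (y : Fin n → Bool) : wtR y ≤ n := by
  calc wtR y ≤ ∑ _i : Fin n, (1:ℝ) := Finset.sum_le_sum fun i _ => by split <;> norm_num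
  _ = n := by simp

lemma wtR_false {n : ℕ} : wtR (fun _ : Fin n => false) = 0 := by simp [wtR]

lemma wtR_true {n : ℕ} : wtR (fun _ : Fin n => true) = n := by simp [wtR]

lemma filter_update {n : ℕ} (x : Fin n → Bool) (i : Fin n) :
    ({i' | x i' ≠ Function.update x i (!x i) i'} : Finset (Fin n)) = {i} := by
  ext i'
  simp only [Finset.mem_filter, Finset.mem_univ, true_and, Finset.mem_singleton,
    Function.update_apply]
  rcases eq_or_ne i' i with h | h
  · subst h; simp
  · simp [h]

lemma neighbor_sum {n : ℕ} (x : Fin n → Bool) (g : (Fin n → Bool) → ℝ) :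
    ∑ y ∈ Finset.univ.filter (fun y => hammingDist x y = 1), g y
      = ∑ i : Fin n, g (Function.update x i (!x i)) := by
  symm
  refine Finset.sum_bij (fun i _ => Function.update x i (!x i)) ?_ ?_ ?_ ?_
  · intro i _
    simp only [Finset.mem_filter, Finset.mem_univ, true_and, hammingDist]
    rw [filter_update]
    simp
  · intro i _ j _ h
    by_contra hne
    have := congrFun h i
    simp only [Function.update_self, Function.update_of_ne hne] at this
    exact (Bool.not_ne_self (x i)) this
  · intro y hy
    simp only [Finset.mem_filter, Finset.mem_univ, true_and, hammingDist] at hy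
    obtain ⟨i, hi⟩ := Finset.card_eq_one.mp hy
    refine ⟨i, Finset.mem_univ i, ?_⟩
    funext i'
    rcases eq_or_ne i' i with h | h
    · subst h
      have : i' ∈ ({i' | x i' ≠ y i'} : Finset (Fin n)) := by rw [hi]; simp
      simp only [Finset.mem_filter, Finset.mem_univ, true_and] at this
      show Function.update x i' (!x i') i' = y i'
      rw [Function.update_self]
      rcases Bool.eq_false_or_eq_true (x i') with h' | h' <;> simp [h'] at this ⊢ <;> simp [this]
    · have : i' ∉ ({i' | x i' ≠ y i'} : Finset (Fin n)) := by rw [hi]; simpa using h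
      simp only [Finset.mem_filter, Finset.mem_univ, true_and, not_not] at this
      show Function.update x i (!x i) i' = y i'
      rw [Function.update_of_ne h, this]
  · intro i _; rfl

lemma wtR_update {n : ℕ} (x : Fin n → Bool) (i : Fin n) :
    wtR (Function.update x i (!x i)) = wtR x + (if x i then -1 else 1) := by
  unfold wtR
  have h1 : ∀ i' : Fin n, (if Function.update x i (!x i) i' then (1:ℝ) else 0)
      = Function.update (fun i' => if x i' then (1:ℝ) else 0) i (if !x i then 1 else 0) i' := by
    intro i'
    rcases eq_or_ne i' i with h | h
    · subst h; simp
    · simp [Function.update_of_ne h]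
  rw [Finset.sum_congr rfl fun i' _ => h1 i']
  rw [Finset.sum_update_of_mem (Finset.mem_univ i)]
  rw [← Finset.add_sum_erase _ _ (Finset.mem_univ i)]
  rcases Bool.eq_false_or_eq_true (x i) with h | h <;> simp [h, Finset.sdiff_singleton_eq_erase] <;> ring

lemma sum_neighbor_wt {n : ℕ} (x : Fin n → Bool) :
    ∑ y ∈ Finset.univ.filter (fun y => hammingDist x y = 1), wtR y
      = n * wtR x + n - 2 * wtR x := by
  rw [neighbor_sum]
  have : ∀ i : Fin n, wtR (Function.update x i (!x i)) = wtR x + (1 - 2 * (if x i then (1:ℝ) else 0)) := by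
    intro i
    rw [wtR_update]
    rcases Bool.eq_false_or_eq_true (x i) with h | h <;> simp [h] <;> ring
  rw [Finset.sum_congr rfl fun i _ => this i]
  rw [Finset.sum_add_distrib, Finset.sum_sub_distrib, ← Finset.mul_sum]
  simp [wtR, mul_comm]
  ring

lemma key_identity {n : ℕ} (hn : 1 ≤ n)
    (𝔾 : Matrix (Fin n → Bool) (Fin n → Bool) ℝ)
    (hG : ∀ x y : Fin n → Bool,
      (𝔾 * (1 - ((Matrix.diagonal fun _ => ((n : ℝ))⁻¹ :
              Matrix (Fin n → Bool) (Fin n → Bool) ℝ))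
          * (hypercubeGraph n).adjMatrix ℝ)) x y
        = (if x = y then (1 : ℝ) else 0) - (n : ℝ) / ((n : ℝ) * 2 ^ n))
    (hS : ∀ x : Fin n → Bool, ∑ y, 𝔾 x y = 0)
    (x : Fin n → Bool) :
    2 * (n : ℝ)⁻¹ * ∑ j, 𝔾 x j * wtR j
      = wtR x - ((n : ℝ) / ((n : ℝ) * 2 ^ n)) * ∑ y : Fin n → Bool, wtR y := by
  have hn0 : (n : ℝ) ≠ 0 := by positivity
  set M : Matrix (Fin n → Bool) (Fin n → Bool) ℝ :=
    1 - ((Matrix.diagonal fun _ => ((n : ℝ))⁻¹) * (hypercubeGraph n).adjMatrix ℝ) with hM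
  have hMapply : ∀ j y : Fin n → Bool,
      M j y = (if j = y then 1 else 0) - (n : ℝ)⁻¹ * (if hammingDist j y = 1 then 1 else 0) := by
    intro j y
    rw [hM, Matrix.sub_apply, Matrix.one_apply, Matrix.diagonal_mul,
      SimpleGraph.adjMatrix_apply]
    rfl
  have hrow : ∀ j : Fin n → Bool,
      ∑ y, M j y * wtR y = 2 * (n : ℝ)⁻¹ * wtR j - 1 := by
    intro j
    have : ∑ y, M j y * wtR y
        = (∑ y, (if j = y then (1:ℝ) else 0) * wtR y)
          - (n : ℝ)⁻¹ * ∑ y, (if hammingDist j y = 1 then (1:ℝ) else 0) * wtR y := by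
      rw [Finset.mul_sum, ← Finset.sum_sub_distrib]
      refine Finset.sum_congr rfl fun y _ => ?_
      rw [hMapply]; ring
    rw [this]
    have h1 : ∑ y, (if j = y then (1:ℝ) else 0) * wtR y = wtR j := by
      simp [Finset.sum_ite_eq]
    have h2 : ∑ y, (if hammingDist j y = 1 then (1:ℝ) else 0) * wtR y
        = (n : ℝ) * wtR j + n - 2 * wtR j := by
      rw [← sum_neighbor_wt j, Finset.sum_filter]
      refine Finset.sum_congr rfl fun y _ => ?_
      split <;> simp
    rw [h1, h2]
    field_simp
    ring
  have hswap : ∑ y, (𝔾 * M) x y * wtR y = ∑ j, 𝔾 x j * ∑ y, M j y * wtR y := by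
    simp_rw [Matrix.mul_apply, Finset.sum_mul, Finset.mul_sum]
    rw [Finset.sum_comm]
    refine Finset.sum_congr rfl fun j _ => Finset.sum_congr rfl fun y _ => by ring
  have hLHS : ∑ y, (𝔾 * M) x y * wtR y = 2 * (n : ℝ)⁻¹ * ∑ j, 𝔾 x j * wtR j := by
    rw [hswap]
    have : ∑ j, 𝔾 x j * (2 * (n : ℝ)⁻¹ * wtR j - 1)
        = 2 * (n : ℝ)⁻¹ * ∑ j, 𝔾 x j * wtR j - ∑ j, 𝔾 x j := by
      rw [Finset.mul_sum, ← Finset.sum_sub_distrib]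
      exact Finset.sum_congr rfl fun j _ => by ring
    rw [Finset.sum_congr rfl fun j _ => by rw [hrow j], this, hS x, sub_zero]
  have hRHS : ∑ y, (𝔾 * M) x y * wtR y
      = wtR x - ((n : ℝ) / ((n : ℝ) * 2 ^ n)) * ∑ y : Fin n → Bool, wtR y := by
    rw [Finset.sum_congr rfl fun y _ => by rw [hG x y]]
    rw [Finset.sum_congr rfl (fun y _ => by
      show ((if x = y then (1:ℝ) else 0) - (n : ℝ) / ((n : ℝ) * 2 ^ n)) * wtR y
        = (if x = y then (1:ℝ) else 0) * wtR y - ((n : ℝ) / ((n : ℝ) * 2 ^ n)) * wtR y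
      ring)]
    rw [Finset.sum_sub_distrib, ← Finset.mul_sum]
    congr 1
    simp [Finset.sum_ite_eq]
  rw [← hLHS, hRHS]


/-- There is a constant `c > 0` such that for all `n ≥ 1` the diffusion
state distance `DSD_1(𝟎,𝟏)` on the hypercube `Q_n` between the all-zero string and the
all-one string satisfies `DSD_1(𝟎,𝟏) ≥ c·n`; that is, `DSD_1(𝟎,𝟏) = Ω(n)`. -/
theorem dsd_one_hypercube_antipodal_lower_bound :
    ∃ c : ℝ, 0 < c ∧
      ∀ (n : ℕ), 1 ≤ n →
      ∀ (𝔾 : Matrix (Fin n → Bool) (Fin n → Bool) ℝ),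
        (∀ x y : Fin n → Bool,
          (𝔾 * (1 - ((Matrix.diagonal fun _ => ((n : ℝ))⁻¹ :
                  Matrix (Fin n → Bool) (Fin n → Bool) ℝ))
              * (hypercubeGraph n).adjMatrix ℝ)) x y
            = (if x = y then (1 : ℝ) else 0) - (n : ℝ) / ((n : ℝ) * 2 ^ n)) →
        (∀ x : Fin n → Bool, ∑ y, 𝔾 x y = 0) →
        c * (n : ℝ) ≤ ∑ j, |𝔾 (fun _ => false) j - 𝔾 (fun _ => true) j| := by
  refine ⟨1/2, by norm_num, fun n hn 𝔾 hG hS => ?_⟩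
  have hn0 : (0:ℝ) < n := by exact_mod_cast hn
  have h0 := key_identity hn 𝔾 hG hS (fun _ => false)
  have h1 := key_identity hn 𝔾 hG hS (fun _ => true)
  rw [wtR_false] at h0
  rw [wtR_true] at h1
  have hsub : 2 * (n : ℝ)⁻¹ * ∑ j, (𝔾 (fun _ => false) j - 𝔾 (fun _ => true) j) * wtR j
      = -(n : ℝ) := by
    have : ∑ j, (𝔾 (fun _ => false) j - 𝔾 (fun _ => true) j) * wtR j
        = (∑ j, 𝔾 (fun _ => false) j * wtR j) - ∑ j, 𝔾 (fun _ => true) j * wtR j := by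
      rw [← Finset.sum_sub_distrib]
      exact Finset.sum_congr rfl fun j _ => by ring
    rw [this, mul_sub, h0, h1]
    ring
  have hkey : |∑ j, (𝔾 (fun _ => false) j - 𝔾 (fun _ => true) j) * wtR j|
      = (n : ℝ) ^ 2 / 2 := by
    have h2 : ∑ j, (𝔾 (fun _ => false) j - 𝔾 (fun _ => true) j) * wtR j
        = -(n : ℝ) ^ 2 / 2 := by
      have hne : (2 * (n : ℝ)⁻¹) ≠ 0 := by positivity
      field_simp at hsub
      nlinarith [hsub]
    rw [h2, abs_div, abs_neg, abs_of_nonneg (by positivity : (0:ℝ) ≤ (n:ℝ)^2)]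
    norm_num
  have hbound : (n : ℝ) ^ 2 / 2 ≤ (n : ℝ) * ∑ j, |𝔾 (fun _ => false) j - 𝔾 (fun _ => true) j| := by
    rw [← hkey]
    calc |∑ j, (𝔾 (fun _ => false) j - 𝔾 (fun _ => true) j) * wtR j|
        ≤ ∑ j, |(𝔾 (fun _ => false) j - 𝔾 (fun _ => true) j) * wtR j| :=
          Finset.abs_sum_le_sum_abs _ _
      _ ≤ ∑ j, (n : ℝ) * |𝔾 (fun _ => false) j - 𝔾 (fun _ => true) j| := by
          refine Finset.sum_le_sum fun j _ => ?_
          rw [abs_mul, abs_of_nonneg (wtR_nonneg j), mul_comm]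
          exact mul_le_mul_of_nonneg_right (wtR_le j) (abs_nonneg _)
      _ = (n : ℝ) * ∑ j, |𝔾 (fun _ => false) j - 𝔾 (fun _ => true) j| := by
          rw [Finset.mul_sum]
  nlinarith [hbound]
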